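/- For any probability measure μ with finite moments, the Boolean convolution powers μ^{⊎t} have Jacobi parameters J(μ^{⊎t}) given by β_0(t) = β_0 t, γ_0(t) = γ_0 t, and β_n(t) = β_n, γ_n(t) = γ_n for all n ≥ 1, where (β_n, γ_n) are the Jacobi parameters of μ. In particular all Jacobi parameters of μ^{⊎t} are polynomial (degree ≤ 1) in t. -/

import Mathlib

open scoped Classical
open MeasureTheory Finset

noncomputable section

/-- `V` is nested inside `U`: some interval with endpoints in `U` contains all of `V`. -/
def Nests {m : ℕ} (U V : Finset (Fin m)) : Prop :=
  ∃ r ∈ U, ∃ s ∈ U, ∀ k ∈ V, r ≤ k ∧ k ≤ s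

/-- A finpartition of `{1,...,m}` is noncrossing. -/
def IsNoncrossing {m : ℕ} (π : Finpartition (Finset.univ : Finset (Fin m))) : Prop :=
  ∀ V₁ ∈ π.parts, ∀ V₂ ∈ π.parts, ∀ x₁ x₂ x₃ x₄ : Fin m,
    x₁ < x₂ → x₂ < x₃ → x₃ < x₄ →
    x₁ ∈ V₁ → x₃ ∈ V₁ → x₂ ∈ V₂ → x₄ ∈ V₂ → V₁ = V₂

/-- The depth of a block: the number of other blocks nesting it. -/
def depth {m : ℕ} (π : Finpartition (Finset.univ : Finset (Fin m)))
    (V : Finset (Fin m)) : ℕ :=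
  (π.parts.filter (fun U => U ≠ V ∧ Nests U V)).card

/-- Noncrossing partitions of `{1,...,m}`. -/
def NCset (m : ℕ) : Finset (Finpartition (Finset.univ : Finset (Fin m))) :=
  Finset.univ.filter IsNoncrossing

/-- Noncrossing partitions with all blocks of size at most 2. -/
def NC12 (m : ℕ) : Finset (Finpartition (Finset.univ : Finset (Fin m))) :=
  Finset.univ.filter (fun π => IsNoncrossing π ∧ ∀ V ∈ π.parts, V.card ≤ 2)

/-- Interval partitions of `{1,...,m}`. -/
def IntPart (m : ℕ) : Finset (Finpartition (Finset.univ : Finset (Fin m))) :=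
  Finset.univ.filter
    (fun π => ∀ V ∈ π.parts, ∀ x ∈ V, ∀ y ∈ V, ∀ z : Fin m, x ≤ z → z ≤ y → z ∈ V)

/-- The `m`-th moment of a measure on `ℝ`. -/
def mom (μ : Measure ℝ) (m : ℕ) : ℝ := ∫ x, x ^ m ∂μ

/-- `μ` has all moments finite. -/
def FiniteMoments (μ : Measure ℝ) : Prop :=
  ∀ m : ℕ, Integrable (fun x => x ^ m) μ

/-- `(β, γ)` are Jacobi parameters for `μ`: there are monic orthogonal polynomials
satisfying the three-term recurrence. -/
def HasJacobi (μ : Measure ℝ) (β γ : ℕ → ℝ) : Prop :=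
  ∃ P : ℕ → Polynomial ℝ,
    (∀ n, (P n).Monic) ∧ (∀ n, (P n).natDegree = n) ∧
    (∀ i j, i ≠ j → ∫ x, (P i).eval x * (P j).eval x ∂μ = 0) ∧
    (Polynomial.X * P 0 = P 1 + Polynomial.C (β 0) * P 0) ∧
    (∀ n, Polynomial.X * P (n + 1) =
      P (n + 2) + Polynomial.C (β (n + 1)) * P (n + 1) + Polynomial.C (γ n) * P n)

/-- `r` is the sequence of free cumulants of `μ` (moment-cumulant formula over
noncrossing partitions). -/
def FreeCumulants (μ : Measure ℝ) (r : ℕ → ℝ) : Prop :=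
  ∀ m : ℕ, 1 ≤ m → mom μ m = ∑ π ∈ NCset m, ∏ V ∈ π.parts, r V.card

/-- `η` is the sequence of Boolean cumulants of `μ`. -/
def BooleanCumulants (μ : Measure ℝ) (η : ℕ → ℝ) : Prop :=
  ∀ m : ℕ, 1 ≤ m → mom μ m = ∑ π ∈ IntPart m, ∏ V ∈ π.parts, η V.card

/-- `R` is the sequence of two-state free cumulants of the pair `(μ̃, μ)`,
where `r` are the free cumulants of `μ`. -/
def TwoStateCumulants (μt μ : Measure ℝ) (R r : ℕ → ℝ) : Prop :=
  FreeCumulants μ r ∧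
  ∀ m : ℕ, 1 ≤ m → mom μt m =
    ∑ π ∈ NCset m,
      (∏ V ∈ π.parts.filter (fun V => depth π V = 0), R V.card) *
      (∏ V ∈ π.parts.filter (fun V => depth π V ≠ 0), r V.card)



namespace JacOp

/-- basis vector -/
def e (j : ℕ) : ℕ → ℝ := fun n => if n = j then 1 else 0

/-- Jacobi operator -/
def J (β γ : ℕ → ℝ) : (ℕ → ℝ) →ₗ[ℝ] (ℕ → ℝ) where
  toFun v := fun n => (if n = 0 then 0 else v (n - 1)) + β n * v n + γ n * v (n + 1)
  map_add' u v := by funext n; by_cases h : n = 0 <;> simp [h] <;> ring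
  map_smul' c v := by funext n; by_cases h : n = 0 <;> simp [h] <;> ring

lemma J_apply (β γ : ℕ → ℝ) (v : ℕ → ℝ) (n : ℕ) :
    J β γ v n = (if n = 0 then 0 else v (n - 1)) + β n * v n + γ n * v (n + 1) := rfl

lemma J_e0 (β γ : ℕ → ℝ) : J β γ (e 0) = e 1 + β 0 • e 0 := by
  funext n
  rcases n with _ | n
  · simp [J_apply, e]
  · rcases n with _ | n <;> simp [J_apply, e, Nat.succ_ne_zero]

lemma J_e (β γ : ℕ → ℝ) (j : ℕ) :
    J β γ (e (j + 1)) = e (j + 2) + β (j + 1) • e (j + 1) + γ j • e j := by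
  funext n
  simp only [J_apply, e, Pi.add_apply, Pi.smul_apply, smul_eq_mul]
  split_ifs <;> first | ring1 | omega | ((obtain rfl : n = j := by omega); ring1) | ((obtain rfl : n = j + 1 := by omega); ring1) | ((obtain rfl : n = j + 2 := by omega); ring1)

end JacOp

namespace JacOp

def Jp (β γ : ℕ → ℝ) : Module.End ℝ (ℕ → ℝ) := J β γ

/-- kill the 0-th coordinate -/
def Qp (v : ℕ → ℝ) : ℕ → ℝ := fun n => if n = 0 then 0 else v n

/-- iterated "never returning to 0" vectors -/
def u (β γ : ℕ → ℝ) : ℕ → (ℕ → ℝ)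
  | 0 => e 0
  | m + 1 => Qp (J β γ (u β γ m))

/-- first-return quantities -/
def g (β γ : ℕ → ℝ) (k : ℕ) : ℝ := J β γ (u β γ (k - 1)) 0

/-- moments from the Jacobi operator -/
def fm (β γ : ℕ → ℝ) (m : ℕ) : ℝ := ((Jp β γ) ^ m) (e 0) 0

lemma decomp (w : ℕ → ℝ) : w = Qp w + w 0 • e 0 := by
  funext n
  by_cases h : n = 0 <;> simp [Qp, e, h]

lemma u_zero (β γ : ℕ → ℝ) (m : ℕ) (hm : 1 ≤ m) : u β γ m 0 = 0 := by
  match m, hm with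
  | j + 1, _ => simp [u, Qp]

lemma fm_zero (β γ : ℕ → ℝ) : fm β γ 0 = 1 := rfl

lemma renewal_vec (β γ : ℕ → ℝ) (m : ℕ) :
    ((Jp β γ) ^ m) (e 0) =
      u β γ m + ∑ k ∈ Icc 1 m, g β γ k • ((Jp β γ) ^ (m - k)) (e 0) := by
  induction m with
  | zero =>
      rw [pow_zero, Finset.Icc_eq_empty (by omega), Finset.sum_empty, add_zero]
      rfl
  | succ m ih =>
      have h1 : ((Jp β γ) ^ (m + 1)) (e 0) = J β γ (((Jp β γ) ^ m) (e 0)) := by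
        rw [pow_succ']
        rfl
      have h2 : J β γ (u β γ m) = u β γ (m + 1) + g β γ (m + 1) • e 0 :=
        decomp (J β γ (u β γ m))
      have h3 : ∀ k ∈ Icc 1 m,
          J β γ (g β γ k • ((Jp β γ) ^ (m - k)) (e 0))
            = g β γ k • ((Jp β γ) ^ (m + 1 - k)) (e 0) := by
        intro k hk
        rw [LinearMap.map_smul]
        congr 1
        have hk' : k ≤ m := (mem_Icc.mp hk).2
        have h5 : m + 1 - k = (m - k) + 1 := by omega
        rw [h5, pow_succ']
        rfl
      rw [h1, ih, map_add, map_sum, Finset.sum_congr rfl h3, h2,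
        Finset.sum_Icc_succ_top (by omega : 1 ≤ m + 1), Nat.sub_self, pow_zero]
      have h6 : ((1 : Module.End ℝ (ℕ → ℝ))) (e 0) = e 0 := rfl
      rw [h6]
      abel

lemma fm_renewal (β γ : ℕ → ℝ) (m : ℕ) (hm : 1 ≤ m) :
    fm β γ m = ∑ k ∈ Icc 1 m, g β γ k * fm β γ (m - k) := by
  have := congrFun (renewal_vec β γ m) 0
  unfold fm
  rw [this]
  simp only [Pi.add_apply, Finset.sum_apply, Pi.smul_apply, smul_eq_mul]
  rw [u_zero β γ m hm, zero_add]

end JacOp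

namespace JacOp

variable {β γ : ℕ → ℝ} {t : ℝ}

/-- the modified parameters -/
def md (t : ℝ) (β : ℕ → ℝ) : ℕ → ℝ := fun n => if n = 0 then t * β 0 else β n

lemma Qp_J_md (v : ℕ → ℝ) : Qp (J (md t β) (md t γ) v) = Qp (J β γ v) := by
  funext n
  by_cases h : n = 0
  · simp [Qp, h]
  · simp [Qp, h, J_apply, md]

lemma u_md : ∀ m, u (md t β) (md t γ) m = u β γ m
  | 0 => rfl
  | m + 1 => by
      show Qp (J (md t β) (md t γ) (u (md t β) (md t γ) m)) = _
      rw [u_md m, Qp_J_md]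
      rfl

lemma g_md (k : ℕ) (hk : 1 ≤ k) : g (md t β) (md t γ) k = t * g β γ k := by
  unfold g
  rw [u_md]
  rcases k with _ | k
  · omega
  rcases k with _ | k
  · -- k = 1 : u 0 = e 0
    show J (md t β) (md t γ) (e 0) 0 = t * (J β γ (e 0) 0)
    simp [J_apply, e, md]
  · -- k ≥ 2
    have h0 : u β γ (k + 1) 0 = 0 := u_zero β γ (k + 1) (by omega)
    show J (md t β) (md t γ) (u β γ (k + 1)) 0 = t * (J β γ (u β γ (k + 1)) 0)
    simp only [J_apply, if_pos rfl, md, h0]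
    norm_num
    ring

/-- vanishing of iterates on vectors supported high up -/
lemma Jpow_zero (β γ : ℕ → ℝ) : ∀ k, ∀ v : ℕ → ℝ, (∀ i ≤ k, v i = 0) →
    ((Jp β γ) ^ k) v 0 = 0
  | 0, v, hv => hv 0 le_rfl
  | k + 1, v, hv => by
      have h1 : ((Jp β γ) ^ (k + 1)) v = ((Jp β γ) ^ k) (J β γ v) := by
        rw [pow_succ]
        rfl
      rw [h1]
      refine Jpow_zero β γ k (J β γ v) ?_
      intro i hi
      have h2 : v i = 0 := hv i (by omega)
      have h3 : v (i + 1) = 0 := hv (i + 1) (by omega)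
      have h4 : i ≠ 0 → v (i - 1) = 0 := fun _ => hv (i - 1) (by omega)
      by_cases h : i = 0
      · subst h
        simp [J_apply, h2, h3]
      · simp [J_apply, h, h4 h, h2, h3]

lemma e_high (j : ℕ) (i : ℕ) (h : i < j) : e j i = 0 := by
  simp [e]
  omega

lemma aeval_low (β γ : ℕ → ℝ) (p : Polynomial ℝ) (j : ℕ) (hj : p.natDegree < j) :
    (Polynomial.aeval (Jp β γ) p) (e j) 0 = 0 := by
  conv_lhs => rw [p.as_sum_range' (p.natDegree + 1) (by omega)]
  rw [map_sum]
  have : ∀ i ∈ range (p.natDegree + 1),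
      ((Polynomial.aeval (Jp β γ)) ((Polynomial.monomial i) (p.coeff i))) (e j) 0 = 0 := by
    intro i hi
    rw [Polynomial.aeval_monomial]
    have hij : i < j := by
      have := mem_range.mp hi
      omega
    have : ((Jp β γ) ^ i) (e j) 0 = 0 :=
      Jpow_zero β γ i (e j) (fun l hl => e_high j l (by omega))
    rw [Module.End.mul_apply, Module.algebraMap_end_apply, Pi.smul_apply, this, smul_zero]
  rw [LinearMap.sum_apply, Finset.sum_apply]
  exact Finset.sum_eq_zero this

end JacOp



namespace JacOp

lemma P_zero_eq_one (P : ℕ → Polynomial ℝ) (hm : ∀ n, (P n).Monic)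
    (hd : ∀ n, (P n).natDegree = n) : P 0 = 1 := by
  obtain ⟨a, ha⟩ := Polynomial.natDegree_eq_zero.mp (hd 0)
  have := hm 0
  rw [← ha] at this ⊢
  have h1 : a = 1 := by
    have := this.leadingCoeff
    rwa [Polynomial.leadingCoeff_C] at this
  rw [h1, map_one]

lemma aeval_rec (β γ : ℕ → ℝ) (P : ℕ → Polynomial ℝ) (hP0 : P 0 = 1)
    (h1 : Polynomial.X * P 0 = P 1 + Polynomial.C (β 0) * P 0)
    (h2 : ∀ n, Polynomial.X * P (n + 1) =
      P (n + 2) + Polynomial.C (β (n + 1)) * P (n + 1) + Polynomial.C (γ n) * P n) :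
    ∀ n, (Polynomial.aeval (Jp β γ) (P n)) (e 0) = e n := by
  have key : ∀ n, (Polynomial.aeval (Jp β γ) (P n)) (e 0) = e n ∧
      (Polynomial.aeval (Jp β γ) (P (n + 1))) (e 0) = e (n + 1) := by
    intro n
    induction n with
    | zero =>
        constructor
        · rw [hP0, map_one]
          rfl
        · have hP1 : P 1 = Polynomial.X * P 0 - Polynomial.C (β 0) * P 0 := by
            rw [h1]; ring
          rw [hP1, map_sub, map_mul, map_mul, Polynomial.aeval_X, Polynomial.aeval_C, hP0,
            map_one, mul_one, mul_one]
          rw [LinearMap.sub_apply, Module.algebraMap_end_apply]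
          have : (Jp β γ) (e 0) = e 1 + β 0 • e 0 := J_e0 β γ
          rw [this]
          abel
    | succ n ih =>
        refine ⟨ih.2, ?_⟩
        have hP2 : P (n + 2) = Polynomial.X * P (n + 1)
            - Polynomial.C (β (n + 1)) * P (n + 1) - Polynomial.C (γ n) * P n := by
          rw [h2 n]; ring
        rw [hP2, map_sub, map_sub, map_mul, map_mul, map_mul, Polynomial.aeval_X,
          Polynomial.aeval_C, Polynomial.aeval_C]
        rw [LinearMap.sub_apply, LinearMap.sub_apply, Module.End.mul_apply,
          Module.End.mul_apply, Module.End.mul_apply, Module.algebraMap_end_apply,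
          Module.algebraMap_end_apply, ih.1, ih.2]
        have : (Jp β γ) (e (n + 1)) = e (n + 2) + β (n + 1) • e (n + 1) + γ n • e n :=
      J_e β γ n
        rw [this]
        abel
  exact fun n => (key n).1

end JacOp

section Integrals

open JacOp

lemma integrable_poly (ρ : Measure ℝ) (hfin : FiniteMoments ρ) (p : Polynomial ℝ) :
    Integrable (fun x => p.eval x) ρ := by
  have h : (fun x : ℝ => p.eval x)
      = fun x => ∑ i ∈ range (p.natDegree + 1), p.coeff i * x ^ i := by
    funext x
    exact p.eval_eq_sum_range x
  rw [h]
  exact integrable_finset_sum _ (fun i _ => (hfin i).const_mul _)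

lemma mom_zero (ρ : Measure ℝ) [IsProbabilityMeasure ρ] : mom ρ 0 = 1 := by
  simp [mom]

lemma integral_eq_aeval (ρ : Measure ℝ) [IsProbabilityMeasure ρ]
    (hfin : FiniteMoments ρ) (β γ : ℕ → ℝ)
    (hmom : ∀ m, mom ρ m = fm β γ m) (p : Polynomial ℝ) :
    ∫ x, p.eval x ∂ρ = (Polynomial.aeval (Jp β γ) p) (e 0) 0 := by
  have h : (fun x : ℝ => p.eval x)
      = fun x => ∑ i ∈ range (p.natDegree + 1), p.coeff i * x ^ i := by
    funext x
    exact p.eval_eq_sum_range x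
  rw [h, integral_finset_sum _ (fun i _ => (hfin i).const_mul _)]
  conv_rhs => rw [p.as_sum_range' (p.natDegree + 1) (by omega)]
  rw [map_sum, LinearMap.sum_apply, Finset.sum_apply]
  refine Finset.sum_congr rfl fun i _ => ?_
  rw [Polynomial.aeval_monomial, Module.End.mul_apply, Module.algebraMap_end_apply,
    Pi.smul_apply, smul_eq_mul]
  have : ∫ x, p.coeff i * x ^ i ∂ρ = p.coeff i * mom ρ i := by
    rw [mom, ← integral_const_mul]
  rw [this, hmom i]
  rfl

/-- From Jacobi data, moments are given by the Jacobi operator. -/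
lemma jacobi_moments (ρ : Measure ℝ) [IsProbabilityMeasure ρ]
    (hfin : FiniteMoments ρ) (β γ : ℕ → ℝ) (hJ : HasJacobi ρ β γ) :
    ∀ m, mom ρ m = fm β γ m := by
  obtain ⟨P, hmon, hdeg, horth, hrec0, hrec⟩ := hJ
  have hP0 : P 0 = 1 := P_zero_eq_one P hmon hdeg
  have haev : ∀ n, (Polynomial.aeval (Jp β γ) (P n)) (e 0) = e n :=
    aeval_rec β γ P hP0 hrec0 hrec
  have hintP : ∀ n, 1 ≤ n → ∫ x, (P n).eval x ∂ρ = 0 := by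
    intro n hn
    have := horth n 0 (by omega)
    rw [hP0] at this
    simpa using this
  -- main claim by induction on the degree bound
  have main : ∀ d, ∀ p : Polynomial ℝ, p.natDegree ≤ d →
      ∫ x, p.eval x ∂ρ = (Polynomial.aeval (Jp β γ) p) (e 0) 0 := by
    intro d
    induction d with
    | zero =>
        intro p hp
        obtain ⟨a, rfl⟩ : ∃ a, p = Polynomial.C a :=
          ⟨p.coeff 0, (Polynomial.eq_C_of_natDegree_le_zero hp)⟩
        rw [Polynomial.aeval_C, Module.algebraMap_end_apply]
        simp [e]
    | succ d ih =>
        intro p hp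
        set c := p.coeff (d + 1) with hc
        set r := p - Polynomial.C c * P (d + 1) with hrdef
        have hrd : r.natDegree ≤ d := by
          rw [Polynomial.natDegree_le_iff_coeff_eq_zero]
          intro i hi
          rw [hrdef, Polynomial.coeff_sub, Polynomial.coeff_C_mul]
          rcases Nat.lt_or_ge (d + 1) i with h | h
          · rw [Polynomial.coeff_eq_zero_of_natDegree_lt (lt_of_le_of_lt hp h),
              Polynomial.coeff_eq_zero_of_natDegree_lt (by rw [hdeg]; exact h)]
            ring
          · have hieq : i = d + 1 := by omega
            subst hieq
            have hP1 : (P (d + 1)).coeff (d + 1) = 1 := by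
              have := (hmon (d + 1)).coeff_natDegree
              rwa [hdeg (d + 1)] at this
            rw [hP1, hc, mul_one, sub_self]
        have hpr : p = r + Polynomial.C c * P (d + 1) := by
          rw [hrdef]; ring
        have hint1 : Integrable (fun x => r.eval x) ρ := integrable_poly ρ hfin r
        have hint2 : Integrable (fun x => (Polynomial.C c * P (d + 1)).eval x) ρ :=
          integrable_poly ρ hfin _
        calc ∫ x, p.eval x ∂ρ
            = ∫ x, (r.eval x + (Polynomial.C c * P (d + 1)).eval x) ∂ρ := by
              congr 1
              funext x
              rw [hpr, Polynomial.eval_add]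
          _ = (∫ x, r.eval x ∂ρ) + ∫ x, (Polynomial.C c * P (d + 1)).eval x ∂ρ :=
              integral_add hint1 hint2
          _ = (Polynomial.aeval (Jp β γ) r) (e 0) 0 + c * ∫ x, (P (d + 1)).eval x ∂ρ := by
              rw [ih r hrd]
              congr 1
              simp only [Polynomial.eval_mul, Polynomial.eval_C]
              rw [← integral_const_mul]
          _ = (Polynomial.aeval (Jp β γ) r) (e 0) 0 := by
              rw [hintP (d + 1) (by omega), mul_zero, add_zero]
          _ = (Polynomial.aeval (Jp β γ) p) (e 0) 0 := by
              conv_rhs => rw [hpr]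
              rw [map_add, map_mul, Polynomial.aeval_C]
              rw [LinearMap.add_apply, Module.End.mul_apply, Module.algebraMap_end_apply,
                haev (d + 1), Pi.add_apply, Pi.smul_apply]
              have : e (d + 1) 0 = 0 := by simp [e]
              rw [this, smul_zero, add_zero]
  intro m
  have hmain := main (Polynomial.X ^ m : Polynomial ℝ).natDegree (Polynomial.X ^ m) le_rfl
  rw [mom]
  calc ∫ x, x ^ m ∂ρ = ∫ x, (Polynomial.X ^ m : Polynomial ℝ).eval x ∂ρ := by
        simp
    _ = (Polynomial.aeval (Jp β γ) (Polynomial.X ^ m : Polynomial ℝ)) (e 0) 0 := hmain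
    _ = fm β γ m := by
        rw [map_pow, Polynomial.aeval_X]
        rfl

end Integrals

namespace Comb

lemma mem_IntPart {m : ℕ} (π : Finpartition (Finset.univ : Finset (Fin m))) :
    π ∈ IntPart m ↔
      ∀ V ∈ π.parts, ∀ x ∈ V, ∀ y ∈ V, ∀ z : Fin m, x ≤ z → z ≤ y → z ∈ V := by
  simp [IntPart]

def blk (m k : ℕ) (hk : k ≤ m) : Finset (Fin m) :=
  (Finset.range k).attachFin (fun x hx => lt_of_lt_of_le (Finset.mem_range.mp hx) hk)

lemma mem_blk {m k : ℕ} (hk : k ≤ m) (i : Fin m) : i ∈ blk m k hk ↔ i.val < k := by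
  simp [blk, Finset.mem_attachFin]

lemma card_blk (m k : ℕ) (hk : k ≤ m) : (blk m k hk).card = k := by
  simp [blk, Finset.card_attachFin]

lemma part0_eq_blk {m : ℕ} (hm : 0 < m) (π : Finpartition (Finset.univ : Finset (Fin m)))
    (hπ : π ∈ IntPart m) {V : Finset (Fin m)} (hV : V ∈ π.parts)
    (h0 : (⟨0, hm⟩ : Fin m) ∈ V) (hk : V.card ≤ m) : V = blk m V.card hk := by
  have hint := (mem_IntPart π).mp hπ
  have hdown : ∀ x ∈ V, ∀ z : Fin m, z ≤ x → z ∈ V := by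
    intro x hx z hz
    exact hint V hV ⟨0, hm⟩ h0 x hx z (by simp [Fin.le_def]) hz
  ext i
  rw [mem_blk]
  constructor
  · intro hi
    have hsub : Finset.Iic i ⊆ V := fun z hz => hdown i hi z (Finset.mem_Iic.mp hz)
    have := Finset.card_le_card hsub
    rw [Fin.card_Iic] at this
    omega
  · intro hi
    by_contra hni
    have hsub : V ⊆ Finset.Iio i := by
      intro v hv
      rw [Finset.mem_Iio]
      by_contra hlt
      push_neg at hlt
      exact hni (hdown v hv i hlt)
    have := Finset.card_le_card hsub
    rw [Fin.card_Iio] at this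
    omega

def emb (m k : ℕ) (hk : k ≤ m) : Fin (m - k) ↪ Fin m where
  toFun i := ⟨k + i.val, by have := i.isLt; omega⟩
  inj' := by
    intro a b h
    have : k + a.val = k + b.val := congrArg Fin.val h
    ext
    omega

lemma emb_val {m k : ℕ} (hk : k ≤ m) (i : Fin (m - k)) : (emb m k hk i).val = k + i.val := rfl

def up {m k : ℕ} (hk : k ≤ m) (V : Finset (Fin (m - k))) : Finset (Fin m) :=
  V.map (emb m k hk)

def down {m k : ℕ} (hk : k ≤ m) (V : Finset (Fin m)) : Finset (Fin (m - k)) :=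
  Finset.univ.filter (fun i => emb m k hk i ∈ V)

lemma mem_up {m k : ℕ} (hk : k ≤ m) (V : Finset (Fin (m - k))) (x : Fin m) :
    x ∈ up hk V ↔ ∃ i ∈ V, emb m k hk i = x := by
  simp [up]

lemma mem_down {m k : ℕ} (hk : k ≤ m) (V : Finset (Fin m)) (i : Fin (m - k)) :
    i ∈ down hk V ↔ emb m k hk i ∈ V := by
  simp [down]

lemma up_val_ge {m k : ℕ} (hk : k ≤ m) (V : Finset (Fin (m - k))) (x : Fin m)
    (hx : x ∈ up hk V) : k ≤ x.val := by
  obtain ⟨i, _, rfl⟩ := (mem_up hk V x).mp hx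
  simp [emb_val]

lemma down_up {m k : ℕ} (hk : k ≤ m) (V : Finset (Fin (m - k))) : down hk (up hk V) = V := by
  ext i
  rw [mem_down, mem_up]
  constructor
  · rintro ⟨j, hj, hji⟩
    rwa [(emb m k hk).injective hji] at hj
  · intro hi
    exact ⟨i, hi, rfl⟩

lemma up_down {m k : ℕ} (hk : k ≤ m) (V : Finset (Fin m)) (hV : ∀ v ∈ V, k ≤ v.val) :
    up hk (down hk V) = V := by
  ext x
  rw [mem_up]
  constructor
  · rintro ⟨i, hi, rfl⟩
    exact (mem_down hk V i).mp hi
  · intro hx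
    have hxk := hV x hx
    have hxm := x.isLt
    refine ⟨⟨x.val - k, by omega⟩, ?_, ?_⟩
    · rw [mem_down]
      convert hx using 2
      ext
      simp [emb_val]
      omega
    · ext
      simp [emb_val]
      omega


def glue {m k : ℕ} (hm1 : 1 ≤ k) (hk : k ≤ m)
    (σ : Finpartition (Finset.univ : Finset (Fin (m - k)))) :
    Finpartition (Finset.univ : Finset (Fin m)) where
  parts := insert (blk m k hk) (σ.parts.image (up hk))
  supIndep := by
    rw [Finset.supIndep_iff_pairwiseDisjoint]
    intro a ha b hb hab
    simp only [Finset.coe_insert, Set.mem_insert_iff, Finset.coe_image, Set.mem_image,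
      Finset.mem_coe] at ha hb
    have hblk_up : ∀ W, W ∈ σ.parts → Disjoint (blk m k hk) (up hk W) := by
      intro W _
      rw [Finset.disjoint_left]
      intro x hx hx'
      have := up_val_ge hk W x hx'
      rw [mem_blk] at hx
      omega
    rcases ha with rfl | ⟨V, hV, rfl⟩
    · rcases hb with rfl | ⟨W, hW, rfl⟩
      · exact absurd rfl hab
      · exact hblk_up W hW
    · rcases hb with rfl | ⟨W, hW, rfl⟩
      · exact (hblk_up V hV).symm
      · have hVW : V ≠ W := by
          rintro rfl
          exact hab rfl
        show Disjoint (up hk V) (up hk W)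
        rw [Finset.disjoint_left]
        intro x hx hx'
        obtain ⟨v, hv, rfl⟩ := (mem_up hk V x).mp hx
        obtain ⟨w, hw, hwx⟩ := (mem_up hk W _).mp hx'
        have := (emb m k hk).injective hwx
        subst this
        exact hVW (σ.eq_of_mem_parts hV hW hv hw)
  sup_parts := by
    apply le_antisymm (Finset.sup_le fun V _ => le_top)
    intro i _
    rw [Finset.mem_sup]
    by_cases h : i.val < k
    · exact ⟨blk m k hk, Finset.mem_insert_self _ _, (mem_blk hk i).mpr h⟩
    · push_neg at h
      have him : i.val < m := i.isLt
      set i' : Fin (m - k) := ⟨i.val - k, by omega⟩ with hi'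
      obtain ⟨V, hV, hiV⟩ := σ.exists_mem (Finset.mem_univ i')
      refine ⟨up hk V, Finset.mem_insert_of_mem (Finset.mem_image_of_mem _ hV), ?_⟩
      show i ∈ up hk V
      rw [mem_up]
      refine ⟨i', hiV, ?_⟩
      ext
      simp [emb_val, hi']
      omega
  bot_notMem := by
    rw [Finset.mem_insert]
    push_neg
    constructor
    · intro h
      have : (⟨0, by omega⟩ : Fin m) ∈ blk m k hk := (mem_blk hk _).mpr (by exact hm1)
      rw [← h] at this
      exact absurd this (Finset.notMem_empty _)
    · rw [Finset.mem_image]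
      rintro ⟨V, hV, hVe⟩
      have hVempty : V = ∅ := Finset.map_eq_empty.mp hVe
      rw [hVempty] at hV
      exact σ.bot_notMem hV

lemma glue_parts {m k : ℕ} (hm1 : 1 ≤ k) (hk : k ≤ m)
    (σ : Finpartition (Finset.univ : Finset (Fin (m - k)))) :
    (glue hm1 hk σ).parts = insert (blk m k hk) (σ.parts.image (up hk)) := rfl

lemma blk_not_mem_image {m k : ℕ} (hm1 : 1 ≤ k) (hk : k ≤ m)
    (S : Finset (Finset (Fin (m - k)))) (hS : ∀ V ∈ S, V.Nonempty) :
    blk m k hk ∉ S.image (up hk) := by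
  rw [Finset.mem_image]
  rintro ⟨V, hV, hVe⟩
  obtain ⟨v, hv⟩ := hS V hV
  have hvmem : emb m k hk v ∈ blk m k hk := by
    rw [← hVe, mem_up]
    exact ⟨v, hv, rfl⟩
  rw [mem_blk, emb_val] at hvmem
  omega

lemma glue_mem_IntPart {m k : ℕ} (hm1 : 1 ≤ k) (hk : k ≤ m)
    (σ : Finpartition (Finset.univ : Finset (Fin (m - k)))) (hσ : σ ∈ IntPart (m - k)) :
    glue hm1 hk σ ∈ IntPart m := by
  rw [mem_IntPart]
  intro V hV x hx y hy z hxz hzy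
  rw [glue_parts, Finset.mem_insert] at hV
  rcases hV with rfl | hV
  · rw [mem_blk] at hy ⊢
    have : z.val ≤ y.val := hzy
    omega
  · rw [Finset.mem_image] at hV
    obtain ⟨W, hW, rfl⟩ := hV
    obtain ⟨x', hx', rfl⟩ := (mem_up hk W x).mp hx
    obtain ⟨y', hy', rfl⟩ := (mem_up hk W y).mp hy
    have hxv : k + x'.val ≤ z.val := hxz
    have hyv : z.val ≤ k + y'.val := hzy
    have hzm : z.val < m := z.isLt
    set z' : Fin (m - k) := ⟨z.val - k, by omega⟩ with hz'
    have hz'mem : z' ∈ W := by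
      refine (mem_IntPart σ).mp hσ W hW x' hx' y' hy' z' ?_ ?_
      · show x'.val ≤ z'.val
        simp [hz']
        omega
      · show z'.val ≤ y'.val
        simp [hz']
        omega
    rw [mem_up]
    refine ⟨z', hz'mem, ?_⟩
    ext
    simp [emb_val, hz']
    omega

lemma glue_part0 {m k : ℕ} (hm1 : 1 ≤ k) (hk : k ≤ m) (hm : 0 < m)
    (σ : Finpartition (Finset.univ : Finset (Fin (m - k)))) :
    (glue hm1 hk σ).part ⟨0, hm⟩ = blk m k hk := by
  apply Finpartition.part_eq_of_mem
  · rw [glue_parts]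
    exact Finset.mem_insert_self _ _
  · rw [mem_blk]
    exact hm1

lemma glue_prod {m k : ℕ} (hm1 : 1 ≤ k) (hk : k ≤ m)
    (σ : Finpartition (Finset.univ : Finset (Fin (m - k)))) (c : ℕ → ℝ) :
    ∏ V ∈ (glue hm1 hk σ).parts, c V.card = c k * ∏ V ∈ σ.parts, c V.card := by
  rw [glue_parts, Finset.prod_insert
    (blk_not_mem_image hm1 hk σ.parts (fun V hV => σ.nonempty_of_mem_parts hV))]
  rw [card_blk]
  congr 1
  rw [Finset.prod_image]
  · apply Finset.prod_congr rfl
    intro V _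
    rw [up, Finset.card_map]
  · intro V _ W _ h
    have := congrArg (down hk) h
    rwa [down_up, down_up] at this

lemma glue_injective {m k : ℕ} (hm1 : 1 ≤ k) (hk : k ≤ m)
    (σ₁ σ₂ : Finpartition (Finset.univ : Finset (Fin (m - k))))
    (h : glue hm1 hk σ₁ = glue hm1 hk σ₂) : σ₁ = σ₂ := by
  have hp := congrArg Finpartition.parts h
  rw [glue_parts, glue_parts] at hp
  have h1 : σ₁.parts.image (up hk) = σ₂.parts.image (up hk) := by
    have e1 := congrArg (fun s => Finset.erase s (blk m k hk)) hp
    simpa [Finset.erase_insert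
        (blk_not_mem_image hm1 hk σ₁.parts (fun V hV => σ₁.nonempty_of_mem_parts hV)),
      Finset.erase_insert
        (blk_not_mem_image hm1 hk σ₂.parts (fun V hV => σ₂.nonempty_of_mem_parts hV))] using e1
  have himg : ∀ S : Finset (Finset (Fin (m - k))),
      Finset.image (down hk) (Finset.image (up hk) S) = S := by
    intro S
    rw [Finset.image_image]
    calc Finset.image (down hk ∘ up hk) S = Finset.image id S :=
          Finset.image_congr (fun x _ => down_up hk x)
      _ = S := Finset.image_id
  ext1
  have := congrArg (Finset.image (down hk)) h1
  rwa [himg, himg] at this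


lemma high_parts {m k : ℕ} (hm : 0 < m) (hk : k ≤ m)
    (π : Finpartition (Finset.univ : Finset (Fin m)))
    {B : Finset (Fin m)} (hBmem : B ∈ π.parts) (hBblk : B = blk m k hk) :
    ∀ V ∈ π.parts.erase B, ∀ v ∈ V, k ≤ v.val := by
  intro V hV v hv
  by_contra hlt
  push_neg at hlt
  have hvB : v ∈ B := by
    rw [hBblk, mem_blk]
    exact hlt
  have : V = B := π.eq_of_mem_parts (Finset.mem_of_mem_erase hV) hBmem hv hvB
  exact (Finset.ne_of_mem_erase hV) this

lemma glue_surjective {m k : ℕ} (hm : 0 < m) (hm1 : 1 ≤ k) (hk : k ≤ m)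
    (π : Finpartition (Finset.univ : Finset (Fin m))) (hπ : π ∈ IntPart m)
    (hkey : (π.part ⟨0, hm⟩).card = k) :
    ∃ σ ∈ IntPart (m - k), glue hm1 hk σ = π := by
  set B := π.part ⟨0, hm⟩ with hBdef
  have hBmem : B ∈ π.parts := π.part_mem.mpr (Finset.mem_univ _)
  have h0B : (⟨0, hm⟩ : Fin m) ∈ B := π.mem_part (Finset.mem_univ _)
  have hBblk : B = blk m k hk := by
    have h1 := part0_eq_blk hm π hπ hBmem h0B (hkey ▸ hk)
    rw [h1]
    ext i
    rw [mem_blk, mem_blk, hkey]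
  have hhigh := high_parts hm hk π hBmem hBblk
  refine ⟨⟨(π.parts.erase B).image (down hk), ?_, ?_, ?_⟩, ?_, ?_⟩
  · -- supIndep
    rw [Finset.supIndep_iff_pairwiseDisjoint]
    intro a ha b hb hab
    simp only [Finset.coe_image, Set.mem_image, Finset.mem_coe] at ha hb
    obtain ⟨V, hV, rfl⟩ := ha
    obtain ⟨W, hW, rfl⟩ := hb
    have hVW : V ≠ W := fun h => hab (by rw [h])
    show Disjoint (down hk V) (down hk W)
    rw [Finset.disjoint_left]
    intro i hi hi'
    rw [mem_down] at hi hi'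
    exact hVW (π.eq_of_mem_parts (Finset.mem_of_mem_erase hV) (Finset.mem_of_mem_erase hW) hi hi')
  · -- sup_parts
    apply le_antisymm (Finset.sup_le fun V _ => le_top)
    intro i _
    rw [Finset.mem_sup]
    obtain ⟨V, hV, hiV⟩ := π.exists_mem (Finset.mem_univ (emb m k hk i))
    have hVB : V ≠ B := by
      intro h
      rw [h, hBblk, mem_blk, emb_val] at hiV
      omega
    refine ⟨down hk V, Finset.mem_image_of_mem _ (Finset.mem_erase.mpr ⟨hVB, hV⟩), ?_⟩
    show i ∈ down hk V
    rw [mem_down]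
    exact hiV
  · -- not_bot_mem
    rw [Finset.mem_image]
    rintro ⟨V, hV, hVe⟩
    obtain ⟨v, hv⟩ := π.nonempty_of_mem_parts (Finset.mem_of_mem_erase hV)
    have hvk := hhigh V hV v hv
    have hvm := v.isLt
    have : (⟨v.val - k, by omega⟩ : Fin (m - k)) ∈ down hk V := by
      rw [mem_down]
      convert hv using 1
      ext
      rw [emb_val]
      simp
      omega
    rw [hVe] at this
    exact Finset.notMem_empty _ this
  · -- IntPart (m - k)
    rw [mem_IntPart]
    intro V hV x hx y hy z hxz hzy
    simp only [Finset.mem_image] at hV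
    obtain ⟨W, hW, rfl⟩ := hV
    rw [mem_down] at hx hy ⊢
    refine (mem_IntPart π).mp hπ W (Finset.mem_of_mem_erase hW) _ hx _ hy _ ?_ ?_
    · show (emb m k hk x).val ≤ (emb m k hk z).val
      rw [emb_val, emb_val]
      have : x.val ≤ z.val := hxz
      omega
    · show (emb m k hk z).val ≤ (emb m k hk y).val
      rw [emb_val, emb_val]
      have : z.val ≤ y.val := hzy
      omega
  · -- glue σ = π
    ext1
    rw [glue_parts]
    show insert (blk m k hk) (((π.parts.erase B).image (down hk)).image (up hk)) = π.parts
    have himg : ((π.parts.erase B).image (down hk)).image (up hk) = π.parts.erase B := by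
      rw [Finset.image_image]
      calc Finset.image (up hk ∘ down hk) (π.parts.erase B)
          = Finset.image id (π.parts.erase B) :=
            Finset.image_congr (fun V hV => up_down hk V (hhigh V hV))
        _ = _ := Finset.image_id
    rw [himg, ← hBblk, Finset.insert_erase hBmem]

lemma slice {m k : ℕ} (hm : 0 < m) (hm1 : 1 ≤ k) (hk : k ≤ m) (c : ℕ → ℝ) :
    ∑ π ∈ (IntPart m).filter (fun π => (π.part ⟨0, hm⟩).card = k),
        ∏ V ∈ π.parts, c V.card
      = c k * ∑ σ ∈ IntPart (m - k), ∏ V ∈ σ.parts, c V.card := by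
  rw [Finset.mul_sum]
  refine (Finset.sum_bij (fun σ _ => glue hm1 hk σ) ?_ ?_ ?_ ?_).symm
  · intro σ hσ
    rw [Finset.mem_filter]
    refine ⟨glue_mem_IntPart hm1 hk σ hσ, ?_⟩
    rw [glue_part0 hm1 hk hm σ, card_blk]
  · intro σ₁ _ σ₂ _ h
    exact glue_injective hm1 hk σ₁ σ₂ h
  · intro π hπ
    rw [Finset.mem_filter] at hπ
    obtain ⟨σ, hσ, hglue⟩ := glue_surjective hm hm1 hk π hπ.1 hπ.2
    exact ⟨σ, hσ, hglue⟩
  · intro σ hσ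
    exact (glue_prod hm1 hk σ c).symm

lemma intpart_renewal (m : ℕ) (hm : 0 < m) (c : ℕ → ℝ) :
    ∑ π ∈ IntPart m, ∏ V ∈ π.parts, c V.card
      = ∑ k ∈ Icc 1 m, c k * ∑ σ ∈ IntPart (m - k), ∏ V ∈ σ.parts, c V.card := by
  have hmaps : ∀ π ∈ IntPart m, (π.part (⟨0, hm⟩ : Fin m)).card ∈ Icc 1 m := by
    intro π _
    rw [mem_Icc]
    have hBmem := π.part_mem.mpr (Finset.mem_univ (⟨0, hm⟩ : Fin m))
    constructor
    · exact Finset.card_pos.mpr (π.nonempty_of_mem_parts hBmem)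
    · calc (π.part ⟨0, hm⟩).card ≤ (Finset.univ : Finset (Fin m)).card :=
            Finset.card_le_card (π.le hBmem)
        _ = m := by rw [Finset.card_univ, Fintype.card_fin]
  calc ∑ π ∈ IntPart m, ∏ V ∈ π.parts, c V.card
      = ∑ k ∈ Icc 1 m, ∑ π ∈ (IntPart m).filter (fun π => (π.part ⟨0, hm⟩).card = k),
          ∏ V ∈ π.parts, c V.card :=
        (Finset.sum_fiberwise_of_maps_to hmaps _).symm
    _ = ∑ k ∈ Icc 1 m, c k * ∑ σ ∈ IntPart (m - k), ∏ V ∈ σ.parts, c V.card := by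
        refine Finset.sum_congr rfl fun k hk => ?_
        obtain ⟨hk1, hk2⟩ := mem_Icc.mp hk
        exact slice hm hk1 hk2 c

lemma intpart_sum_zero (c : ℕ → ℝ) :
    ∑ σ ∈ IntPart 0, ∏ V ∈ σ.parts, c V.card = 1 := by
  have hparts : ∀ π : Finpartition (Finset.univ : Finset (Fin 0)), π.parts = ∅ := by
    intro π
    rw [Finset.eq_empty_iff_forall_notMem]
    intro V hV
    obtain ⟨x, _⟩ := π.nonempty_of_mem_parts hV
    exact x.elim0
  set π₀ : Finpartition (Finset.univ : Finset (Fin 0)) :=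
    (Finpartition.empty (Finset (Fin 0))).copy (by simp) with hπ₀
  have hmem : π₀ ∈ IntPart 0 := by
    rw [mem_IntPart]
    intro V hV
    rw [hparts] at hV
    exact absurd hV (Finset.notMem_empty _)
  have hsingle : IntPart 0 = {π₀} := by
    apply Finset.eq_singleton_iff_unique_mem.mpr
    refine ⟨hmem, fun π _ => ?_⟩
    ext1
    rw [hparts, hparts]
  rw [hsingle, Finset.sum_singleton, hparts, Finset.prod_empty]

end Comb


section Qpoly

open Polynomial

def Qpoly (b g : ℕ → ℝ) : ℕ → Polynomial ℝ
  | 0 => 1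
  | 1 => X - C (b 0)
  | (n + 2) => (X - C (b (n + 1))) * Qpoly b g (n + 1) - C (g n) * Qpoly b g n

lemma Qpoly_monic_deg (b g : ℕ → ℝ) :
    ∀ n, (Qpoly b g n).Monic ∧ (Qpoly b g n).natDegree = n := by
  have key : ∀ n, ((Qpoly b g n).Monic ∧ (Qpoly b g n).natDegree = n) ∧
      ((Qpoly b g (n + 1)).Monic ∧ (Qpoly b g (n + 1)).natDegree = n + 1) := by
    intro n
    induction n with
    | zero =>
        refine ⟨⟨monic_one, natDegree_one⟩, ?_, ?_⟩
        · exact monic_X_sub_C _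
        · exact natDegree_X_sub_C _
    | succ n ih =>
        refine ⟨ih.2, ?_⟩
        have hmul : ((X - C (b (n + 1))) * Qpoly b g (n + 1)).Monic :=
          (monic_X_sub_C _).mul ih.2.1
        have hdmul : ((X - C (b (n + 1))) * Qpoly b g (n + 1)).natDegree = n + 2 := by
          rw [(monic_X_sub_C _).natDegree_mul ih.2.1, natDegree_X_sub_C, ih.2.2]
          omega
        have hdlow : (C (g n) * Qpoly b g n).degree
            < ((X - C (b (n + 1))) * Qpoly b g (n + 1)).degree := by
          rw [Polynomial.degree_eq_natDegree hmul.ne_zero, hdmul]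
          calc (C (g n) * Qpoly b g n).degree
              ≤ (C (g n)).degree + (Qpoly b g n).degree := degree_mul_le _ _
            _ ≤ 0 + (Qpoly b g n).degree := by
                gcongr
                exact degree_C_le
            _ = (Qpoly b g n).degree := zero_add _
            _ ≤ ((Qpoly b g n).natDegree : WithBot ℕ) := degree_le_natDegree
            _ < ((n + 2 : ℕ) : WithBot ℕ) := by
                rw [ih.1.2]
                exact_mod_cast (by omega : n < n + 2)
        constructor
        · show ((X - C (b (n + 1))) * Qpoly b g (n + 1) - C (g n) * Qpoly b g n).Monic
          exact hmul.sub_of_left hdlow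
        · show ((X - C (b (n + 1))) * Qpoly b g (n + 1) - C (g n) * Qpoly b g n).natDegree
              = n + 2
          rw [← hdmul]
          apply natDegree_sub_eq_left_of_natDegree_lt
          rw [hdmul]
          calc (C (g n) * Qpoly b g n).natDegree ≤ (C (g n)).natDegree
                + (Qpoly b g n).natDegree := natDegree_mul_le
            _ ≤ 0 + n := by rw [natDegree_C, ih.1.2]
            _ < n + 2 := by omega
  exact fun n => (key n).1

lemma Qpoly_rec0 (b g : ℕ → ℝ) :
    X * Qpoly b g 0 = Qpoly b g 1 + C (b 0) * Qpoly b g 0 := by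
  show X * 1 = (X - C (b 0)) + C (b 0) * 1
  ring

lemma Qpoly_rec (b g : ℕ → ℝ) (n : ℕ) :
    X * Qpoly b g (n + 1) =
      Qpoly b g (n + 2) + C (b (n + 1)) * Qpoly b g (n + 1) + C (g n) * Qpoly b g n := by
  show X * Qpoly b g (n + 1) =
    ((X - C (b (n + 1))) * Qpoly b g (n + 1) - C (g n) * Qpoly b g n)
      + C (b (n + 1)) * Qpoly b g (n + 1) + C (g n) * Qpoly b g n
  ring

end Qpoly

set_option maxHeartbeats 1000000 in
/-- Boolean convolution powers rescale only the level-0 Jacobi parameters. -/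
theorem stmt_8 (μ ν : Measure ℝ) [IsProbabilityMeasure μ] [IsProbabilityMeasure ν]
    (hfinμ : FiniteMoments μ) (hfinν : FiniteMoments ν)
    (β γ : ℕ → ℝ) (hJ : HasJacobi μ β γ)
    (η : ℕ → ℝ) (hη : BooleanCumulants μ η)
    (t : ℝ) (ht : 0 < t)
    (hν : BooleanCumulants ν (fun n => t * η n)) :
    HasJacobi ν (fun n => if n = 0 then t * β 0 else β n)
      (fun n => if n = 0 then t * γ 0 else γ n) := by
  classical
  open JacOp Comb Polynomial in
  -- notation
  set b' : ℕ → ℝ := JacOp.md t β with hb'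
  set g' : ℕ → ℝ := JacOp.md t γ with hg'
  -- Step A : moments of μ from the Jacobi operator
  have hmomμ : ∀ m, mom μ m = JacOp.fm β γ m := jacobi_moments μ hfinμ β γ hJ
  -- Step B : Boolean cumulants equal first-return quantities
  have keyB : ∀ k, 1 ≤ k → η k = JacOp.g β γ k := by
    intro k
    induction k using Nat.strong_induction_on with
    | _ k ih =>
      intro hk1
      have hsum_eq_fm : ∀ i, (∑ σ ∈ IntPart i, ∏ V ∈ σ.parts, η V.card) = JacOp.fm β γ i := by
        intro i
        by_cases h0 : i = 0
        · rw [h0, Comb.intpart_sum_zero η, JacOp.fm_zero]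
        · rw [← hη i (by omega), hmomμ i]
      have h1 : JacOp.fm β γ k = ∑ j ∈ Icc 1 k, η j * JacOp.fm β γ (k - j) := by
        calc JacOp.fm β γ k = mom μ k := (hmomμ k).symm
          _ = ∑ π ∈ IntPart k, ∏ V ∈ π.parts, η V.card := hη k hk1
          _ = ∑ j ∈ Icc 1 k, η j * ∑ σ ∈ IntPart (k - j), ∏ V ∈ σ.parts, η V.card :=
              Comb.intpart_renewal k (by omega) η
          _ = ∑ j ∈ Icc 1 k, η j * JacOp.fm β γ (k - j) := by
              refine Finset.sum_congr rfl fun j _ => ?_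
              rw [hsum_eq_fm]
      have h2 : JacOp.fm β γ k = ∑ j ∈ Icc 1 k, JacOp.g β γ j * JacOp.fm β γ (k - j) :=
        JacOp.fm_renewal β γ k hk1
      have hkmem : k ∈ Icc 1 k := by rw [mem_Icc]; omega
      have h3 : ∑ j ∈ (Icc 1 k).erase k, η j * JacOp.fm β γ (k - j)
            + η k * JacOp.fm β γ (k - k) = ∑ j ∈ Icc 1 k, η j * JacOp.fm β γ (k - j) :=
        Finset.sum_erase_add (Icc 1 k) (fun j => η j * JacOp.fm β γ (k - j)) hkmem
      have h4 : ∑ j ∈ (Icc 1 k).erase k, JacOp.g β γ j * JacOp.fm β γ (k - j)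
            + JacOp.g β γ k * JacOp.fm β γ (k - k)
            = ∑ j ∈ Icc 1 k, JacOp.g β γ j * JacOp.fm β γ (k - j) :=
        Finset.sum_erase_add (Icc 1 k) (fun j => JacOp.g β γ j * JacOp.fm β γ (k - j)) hkmem
      have h5 : ∑ j ∈ (Icc 1 k).erase k, η j * JacOp.fm β γ (k - j)
          = ∑ j ∈ (Icc 1 k).erase k, JacOp.g β γ j * JacOp.fm β γ (k - j) := by
        refine Finset.sum_congr rfl fun j hj => ?_
        have hj1 := Finset.mem_erase.mp hj
        have hj2 := mem_Icc.mp hj1.2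
        rw [ih j (by omega) hj2.1]
      have h6 : η k * JacOp.fm β γ (k - k) = JacOp.g β γ k * JacOp.fm β γ (k - k) := by
        have h7 := h1.symm.trans h2
        rw [← h3, ← h4, h5] at h7
        linarith
      rw [Nat.sub_self, JacOp.fm_zero, mul_one, mul_one] at h6
      exact h6
  -- Step C : moments of ν from the modified Jacobi operator
  have hgmd : ∀ j, 1 ≤ j → JacOp.g b' g' j = t * η j := by
    intro j hj
    rw [hb', hg', JacOp.g_md j hj, keyB j hj]
  have hmomν : ∀ m, mom ν m = JacOp.fm b' g' m := by
    intro m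
    induction m using Nat.strong_induction_on with
    | _ m ih =>
      by_cases hm0 : m = 0
      · rw [hm0, mom_zero, JacOp.fm_zero]
      have hm1 : 1 ≤ m := by omega
      calc mom ν m = ∑ π ∈ IntPart m, ∏ V ∈ π.parts, t * η V.card := hν m hm1
        _ = ∑ j ∈ Icc 1 m, (t * η j) *
            ∑ σ ∈ IntPart (m - j), ∏ V ∈ σ.parts, t * η V.card :=
            Comb.intpart_renewal m (by omega) (fun n => t * η n)
        _ = ∑ j ∈ Icc 1 m, JacOp.g b' g' j * JacOp.fm b' g' (m - j) := by
            refine Finset.sum_congr rfl fun j hj => ?_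
            obtain ⟨hj1, hj2⟩ := mem_Icc.mp hj
            rw [hgmd j hj1]
            congr 1
            by_cases h0 : m - j = 0
            · rw [h0, Comb.intpart_sum_zero (fun n => t * η n), JacOp.fm_zero]
            · rw [← hν (m - j) (by omega), ih (m - j) (by omega)]
        _ = JacOp.fm b' g' m := (JacOp.fm_renewal b' g' m hm1).symm
  -- Step D : the orthogonal polynomials for ν
  have hQmd := Qpoly_monic_deg b' g'
  have hQ0 : Qpoly b' g' 0 = 1 := rfl
  have haevQ : ∀ n, (Polynomial.aeval (JacOp.Jp b' g') (Qpoly b' g' n)) (JacOp.e 0) = JacOp.e n :=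
    JacOp.aeval_rec b' g' (Qpoly b' g') hQ0 (Qpoly_rec0 b' g') (Qpoly_rec b' g')
  have hint : ∀ p : Polynomial ℝ,
      ∫ x, p.eval x ∂ν = (Polynomial.aeval (JacOp.Jp b' g') p) (JacOp.e 0) 0 :=
    integral_eq_aeval ν hfinν b' g' hmomν
  have horthQ : ∀ i j, i ≠ j →
      ∫ x, (Qpoly b' g' i).eval x * (Qpoly b' g' j).eval x ∂ν = 0 := by
    have hlow : ∀ i j, i < j →
        ∫ x, (Qpoly b' g' i).eval x * (Qpoly b' g' j).eval x ∂ν = 0 := by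
      intro i j hij
      have heq : (fun x => (Qpoly b' g' i).eval x * (Qpoly b' g' j).eval x)
          = fun x => (Qpoly b' g' i * Qpoly b' g' j).eval x := by
        funext x
        rw [Polynomial.eval_mul]
      rw [heq, hint]
      rw [map_mul, Module.End.mul_apply, haevQ j]
      exact JacOp.aeval_low b' g' (Qpoly b' g' i) j (by rw [(hQmd i).2]; omega)
    intro i j hij
    rcases Nat.lt_or_ge i j with h | h
    · exact hlow i j h
    · have hji : j < i := by omega
      have := hlow j i hji
      calc ∫ x, (Qpoly b' g' i).eval x * (Qpoly b' g' j).eval x ∂ν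
          = ∫ x, (Qpoly b' g' j).eval x * (Qpoly b' g' i).eval x ∂ν := by
            congr 1
            funext x
            ring
        _ = 0 := this
  refine ⟨Qpoly b' g', fun n => (hQmd n).1, fun n => (hQmd n).2, horthQ, ?_, ?_⟩
  · have := Qpoly_rec0 b' g'
    simpa [hb', JacOp.md] using this
  · intro n
    have := Qpoly_rec b' g' n
    simpa [hb', hg', JacOp.md] using this

end
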